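/- Let φ be an endomorphism of a group Π, let β ∈ Π, and let m | n. Then ι_{m,n}(τ_β∘φ) ∘ r_{(βφ(β)⋯φ^{m-1}(β))⁻¹} = r_{(βφ(β)⋯φ^{n-1}(β))⁻¹} ∘ ι_{m,n}(φ) as maps R[φ^m] → R[(τ_β∘φ)ⁿ], where r_g denotes the map on Reidemeister classes induced by right multiplication by g. Consequently, a class [α]ⁿ ∈ R[φⁿ] is irreducible if and only if the corresponding class [α(βφ(β)⋯φ^{n-1}(β))⁻¹]ⁿ ∈ R[(τ_β∘φ)ⁿ] is irreducible. -/
import Mathlib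


variable {G : Type*} [Group G]

/-- The Reidemeister relation of an endomorphism `φ`: `b` is obtained from `a` by the
Reidemeister action `(γ, a) ↦ γ * a * (φ γ)⁻¹`. -/
def ReidRel (φ : Monoid.End G) (a b : G) : Prop := ∃ γ : G, b = γ * a * (φ γ)⁻¹

/-- The Reidemeister relation is an equivalence relation. -/
def ReidSetoid (φ : Monoid.End G) : Setoid G where
  r := ReidRel φ
  iseqv := by
    constructor
    · intro x; exact ⟨1, by simp⟩
    · rintro x y ⟨γ, rfl⟩
      exact ⟨γ⁻¹, by simp [mul_assoc]⟩
    · rintro x y z ⟨γ, rfl⟩ ⟨δ, rfl⟩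
      exact ⟨δ * γ, by simp [map_mul, mul_assoc]⟩

/-- The inner automorphism `τ_β : x ↦ β x β⁻¹` as a monoid endomorphism. -/
def tauConj (β : G) : Monoid.End G := (MulAut.conj β).toMonoidHom

/-- `β φ(β) φ²(β) ⋯ φ^{n-1}(β)`. -/
def prodIter (φ : Monoid.End G) (β : G) (n : ℕ) : G :=
  ((List.range n).map (fun i => (φ ^ i) β)).prod

/-- `α φ^m(α) φ^{2m}(α) ⋯ φ^{(k-1)m}(α)` (`k` factors). -/
def boost (φ : Monoid.End G) (m k : ℕ) (α : G) : G :=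
  ((List.range k).map (fun i => (φ ^ (i * m)) α)).prod

/-- A Reidemeister class of `φⁿ` is irreducible if it is not in the image of any
boosting map `ι_{m,n}` for a proper divisor `m` of `n`. -/
def IrredClass (φ : Monoid.End G) (n : ℕ) (x : Quotient (ReidSetoid (φ ^ n))) : Prop :=
  ¬ ∃ m : ℕ, 0 < m ∧ m ∣ n ∧ m < n ∧ ∃ α : G,
      x = Quotient.mk (ReidSetoid (φ ^ n)) (boost φ m (n / m) α)

lemma end_mul_apply (f g : Monoid.End G) (x : G) : (f * g) x = f (g x) := rfl

lemma end_pow_add_apply (φ : Monoid.End G) (a b : ℕ) (x : G) :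
    (φ ^ (a + b)) x = (φ ^ a) ((φ ^ b) x) := by
  rw [pow_add]; rfl

lemma prodIter_succ (φ : Monoid.End G) (β : G) (n : ℕ) :
    prodIter φ β (n + 1) = prodIter φ β n * (φ ^ n) β := by
  simp [prodIter, List.range_succ]

lemma prodIter_add (φ : Monoid.End G) (β : G) (a b : ℕ) :
    prodIter φ β (a + b) = prodIter φ β a * (φ ^ a) (prodIter φ β b) := by
  induction b with
  | zero => simp [prodIter]
  | succ b ih =>
    rw [← Nat.add_assoc, prodIter_succ, ih, prodIter_succ, map_mul, mul_assoc,
      end_pow_add_apply]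

lemma tau_pow_apply (φ : Monoid.End G) (β : G) (k : ℕ) (x : G) :
    ((tauConj β * φ) ^ k) x = prodIter φ β k * (φ ^ k) x * (prodIter φ β k)⁻¹ := by
  induction k generalizing x with
  | zero => simp [prodIter]
  | succ k ih =>
    have h1 : (tauConj β * φ) ^ (k + 1) = (tauConj β * φ) ^ k * (tauConj β * φ) :=
      pow_succ _ _
    rw [h1, end_mul_apply, end_mul_apply]
    have h2 : (tauConj β) (φ x) = β * φ x * β⁻¹ := rfl
    rw [h2, ih (β * φ x * β⁻¹), map_mul, map_mul, map_inv, prodIter_succ]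
    have h3 : (φ ^ k) (φ x) = (φ ^ (k + 1)) x := by
      rw [end_pow_add_apply φ k 1 x]; rfl
    rw [h3]
    group

/-- Transfer of the Reidemeister relation under right multiplication. -/
lemma reid_transfer (φ : Monoid.End G) (β : G) (n : ℕ) (a b : G) :
    ReidRel (φ ^ n) a b ↔
      ReidRel ((tauConj β * φ) ^ n) (a * (prodIter φ β n)⁻¹) (b * (prodIter φ β n)⁻¹) := by
  constructor
  · rintro ⟨γ, rfl⟩
    refine ⟨γ, ?_⟩
    rw [tau_pow_apply]
    group
  · rintro ⟨γ, hγ⟩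
    refine ⟨γ, ?_⟩
    rw [tau_pow_apply] at hγ
    have := congrArg (· * prodIter φ β n) hγ
    simp only [inv_mul_cancel_right, mul_inv_rev, inv_inv] at this ⊢
    rw [this]; group

lemma boost_succ (φ : Monoid.End G) (m k : ℕ) (α : G) :
    boost φ m (k + 1) α = boost φ m k α * (φ ^ (k * m)) α := by
  simp [boost, List.range_succ]

lemma boost_transfer (φ : Monoid.End G) (β : G) (m k : ℕ) (α : G) :
    boost (tauConj β * φ) m k (α * (prodIter φ β m)⁻¹) =
      boost φ m k α * (prodIter φ β (k * m))⁻¹ := by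
  induction k with
  | zero => simp [boost, prodIter]
  | succ k ih =>
    rw [boost_succ, boost_succ, ih, tau_pow_apply, map_mul, map_inv]
    have h : prodIter φ β ((k + 1) * m) =
        prodIter φ β (k * m) * (φ ^ (k * m)) (prodIter φ β m) := by
      rw [Nat.succ_mul, prodIter_add]
    rw [h]
    group

/-- the boosting maps commute with the right-multiplication correspondences
between Reidemeister classes of `φ^k` and of `(τ_β ∘ φ)^k`; consequently a class of `φⁿ`
is irreducible iff the corresponding class of `(τ_β ∘ φ)ⁿ` is irreducible. -/
theorem stmt_5 {G : Type*} [Group G] (φ ψ : Monoid.End G) (β : G)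
    (hψ : ψ = tauConj β * φ) (m n : ℕ) (hm : 0 < m) (hmn : m ∣ n) :
    (∀ α : G,
      Quotient.mk (ReidSetoid (ψ ^ n)) (boost ψ m (n / m) (α * (prodIter φ β m)⁻¹)) =
        Quotient.mk (ReidSetoid (ψ ^ n)) (boost φ m (n / m) α * (prodIter φ β n)⁻¹)) ∧
    (∀ α : G,
      IrredClass φ n (Quotient.mk (ReidSetoid (φ ^ n)) α) ↔
        IrredClass ψ n (Quotient.mk (ReidSetoid (ψ ^ n)) (α * (prodIter φ β n)⁻¹))) := by
  subst hψ
  constructor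
  · intro α
    have h := boost_transfer φ β m (n / m) α
    rw [Nat.div_mul_cancel hmn] at h
    rw [h]
  · intro α
    unfold IrredClass
    rw [not_iff_not]
    constructor
    · rintro ⟨m', hm', hd', hlt', α₀, heq⟩
      refine ⟨m', hm', hd', hlt', α₀ * (prodIter φ β m')⁻¹, ?_⟩
      have h := boost_transfer φ β m' (n / m') α₀
      rw [Nat.div_mul_cancel hd'] at h
      rw [h]
      exact Quotient.sound ((reid_transfer φ β n _ _).1 (Quotient.exact heq))
    · rintro ⟨m', hm', hd', hlt', α₁, heq⟩
      refine ⟨m', hm', hd', hlt', α₁ * prodIter φ β m', ?_⟩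
      have h := boost_transfer φ β m' (n / m') (α₁ * prodIter φ β m')
      rw [Nat.div_mul_cancel hd', mul_inv_cancel_right] at h
      rw [h] at heq
      exact Quotient.sound ((reid_transfer φ β n _ _).2 (Quotient.exact heq))
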